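/- Let n_rad ≥ 1, n_orb ≥ 1, n = n_rad + n_orb, fix 1 ≤ y ≤ n_rad, and let Z_y = I₂^{⊗(y−1)} ⊗ Z ⊗ I₂^{⊗(n−y)}. Then Z_y is Hilbert–Schmidt-orthogonal to every element of the centre 𝔷 of the dynamical Lie algebra, i.e. ⟨C, Z_y⟩_HS = 0 for each C in the ℝ-span of {i·I₂^{⊗n}, i·(I₂^{⊗ n_rad} ⊗ Z ⊗ I₂^{⊗(n_orb−1)})} ∪ {i·cz_{j,j+1} : n_rad+1 ≤ j ≤ n−1}. (Hence the mean of the loss Tr[UρU†Z_y] over the model vanishes.) -/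

import Mathlib

open Matrix Complex

attribute [local instance 100] LieRing.ofAssociativeRing

noncomputable section

abbrev QMat (n : ℕ) := Matrix (Fin n → Fin 2) (Fin n → Fin 2) ℂ

def PX : Matrix (Fin 2) (Fin 2) ℂ := !![0, 1; 1, 0]
def PY : Matrix (Fin 2) (Fin 2) ℂ := !![0, -Complex.I; Complex.I, 0]
def PZ : Matrix (Fin 2) (Fin 2) ℂ := !![1, 0; 0, -1]

/-- The tensor (Kronecker) product of a family of single-qubit matrices. -/
def tens {n : ℕ} (As : Fin n → Matrix (Fin 2) (Fin 2) ℂ) : QMat n :=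
  Matrix.of fun f g => ∏ k, As k (f k) (g k)

/-- A single-qubit matrix `A` acting on qubit `j` (tensored with identity elsewhere). -/
def onQubit {n : ℕ} (A : Matrix (Fin 2) (Fin 2) ℂ) (j : Fin n) : QMat n :=
  tens fun k => if k = j then A else 1

/-- The Kronecker product of an `a`-qubit matrix and a `b`-qubit matrix. -/
def kron {a b : ℕ} (M : QMat a) (N : QMat b) : QMat (a + b) :=
  Matrix.of fun f g =>
    M (fun i => f (Fin.castAdd b i)) (fun i => g (Fin.castAdd b i)) *
      N (fun i => f (Fin.natAdd a i)) (fun i => g (Fin.natAdd a i))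

/-- The generator of the CZ gate on qubits `j`, `j'`. -/
def czGen {n : ℕ} (j j' : Fin n) : QMat n :=
  (-(Real.pi / 4) : ℂ) • (1 - onQubit PZ j - onQubit PZ j' + onQubit PZ j * onQubit PZ j')

/-- The generators of the rotationally equivariant model: `i X_j, i Y_j, i Z_j` on the
first `nrad` qubits, and `i cz_{j,j+1}` for all neighbouring pairs. -/
def genSet (nrad norb : ℕ) : Set (QMat (nrad + norb)) :=
  {M | ∃ j : Fin (nrad + norb), (j : ℕ) < nrad ∧
      (M = Complex.I • onQubit PX j ∨ M = Complex.I • onQubit PY j ∨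
        M = Complex.I • onQubit PZ j)} ∪
  {M | ∃ (j : ℕ) (h : j + 1 < nrad + norb),
      M = Complex.I • czGen ⟨j, lt_of_le_of_lt (Nat.le_succ j) h⟩ ⟨j + 1, h⟩}

/-- The dynamical Lie algebra: the smallest real Lie subalgebra of the `2^n × 2^n` complex
matrices containing the generators. -/
def DLA (nrad norb : ℕ) : LieSubalgebra ℝ (QMat (nrad + norb)) :=
  LieSubalgebra.lieSpan ℝ _ (genSet nrad norb)


/-- The Hilbert–Schmidt inner product `⟨A, B⟩ = Tr(Aᴴ B)`. -/
def hsInner {n : ℕ} (A B : QMat n) : ℂ := (Aᴴ * B).trace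

/-- `𝔷`: the real span of `i I₂^{⊗n}`, `i (I₂^{⊗n_rad} ⊗ Z ⊗ I₂^{⊗(n_orb-1)})` and the CZ
generators on the angular register. -/
def centreZ (nrad norb : ℕ) (hb : 0 < norb) : Submodule ℝ (QMat (nrad + norb)) :=
  Submodule.span ℝ
    ({Complex.I • (1 : QMat (nrad + norb)),
      Complex.I • kron (1 : QMat nrad) (onQubit PZ (⟨0, hb⟩ : Fin norb))} ∪
     {M | ∃ (j : ℕ) (h : j + 1 < nrad + norb), nrad ≤ j ∧
        M = Complex.I • czGen ⟨j, lt_of_le_of_lt (Nat.le_succ j) h⟩ ⟨j + 1, h⟩})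


lemma tens_one {n : ℕ} : tens (fun _ : Fin n => (1 : Matrix (Fin 2) (Fin 2) ℂ)) = 1 := by
  ext f g
  rcases eq_or_ne f g with h | h
  · subst h; simp [tens, Matrix.one_apply]
  · obtain ⟨k, hk⟩ := Function.ne_iff.mp h
    rw [tens, Matrix.of_apply, Matrix.one_apply, if_neg h,
      Finset.prod_eq_zero (Finset.mem_univ k)]
    simp [Matrix.one_apply, hk]

lemma tens_mul {n : ℕ} (As Bs : Fin n → Matrix (Fin 2) (Fin 2) ℂ) :
    tens As * tens Bs = tens fun k => As k * Bs k := by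
  ext f g
  simp only [tens, Matrix.mul_apply, Matrix.of_apply]
  rw [Fintype.prod_sum fun k i => As k (f k) i * Bs k i (g k)]
  simp [Finset.prod_mul_distrib]

lemma tens_conjTranspose {n : ℕ} (As : Fin n → Matrix (Fin 2) (Fin 2) ℂ) :
    (tens As)ᴴ = tens fun k => (As k)ᴴ := by
  ext f g
  simp [tens, Matrix.conjTranspose_apply, map_prod]

lemma trace_tens {n : ℕ} (As : Fin n → Matrix (Fin 2) (Fin 2) ℂ) :
    (tens As).trace = ∏ k, (As k).trace := by
  simp only [Matrix.trace, Matrix.diag, tens, Matrix.of_apply]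
  rw [Fintype.prod_sum fun k i => As k i i]

lemma hs_tens {n : ℕ} (As Bs : Fin n → Matrix (Fin 2) (Fin 2) ℂ) :
    hsInner (tens As) (tens Bs) = ∏ k, ((As k)ᴴ * Bs k).trace := by
  rw [hsInner, tens_conjTranspose, tens_mul, trace_tens]

lemma PZ_trace : PZ.trace = 0 := by simp [PZ, Matrix.trace_fin_two]

lemma hs_tens_zero {n : ℕ} (As : Fin n → Matrix (Fin 2) (Fin 2) ℂ) (y : Fin n)
    (h : As y = 1) : hsInner (tens As) (onQubit PZ y) = 0 := by
  rw [onQubit, hs_tens, Finset.prod_eq_zero (Finset.mem_univ y)]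
  simp [h, PZ_trace]

lemma kron_tens {a b : ℕ} (As : Fin a → Matrix (Fin 2) (Fin 2) ℂ)
    (Bs : Fin b → Matrix (Fin 2) (Fin 2) ℂ) :
    kron (tens As) (tens Bs) = tens (Fin.append As Bs) := by
  ext f g
  simp only [kron, tens, Matrix.of_apply, Fin.prod_univ_add, Fin.append_left, Fin.append_right]

lemma hs_smul {n : ℕ} (c : ℂ) (A B : QMat n) :
    hsInner (c • A) B = (starRingEnd ℂ) c * hsInner A B := by
  simp [hsInner, Matrix.conjTranspose_smul, Matrix.smul_mul, Matrix.trace_smul, smul_eq_mul]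

lemma hs_add {n : ℕ} (A A' B : QMat n) :
    hsInner (A + A') B = hsInner A B + hsInner A' B := by
  simp [hsInner, Matrix.conjTranspose_add, Matrix.add_mul]

lemma hs_sub {n : ℕ} (A A' B : QMat n) :
    hsInner (A - A') B = hsInner A B - hsInner A' B := by
  simp [hsInner, Matrix.conjTranspose_sub, Matrix.sub_mul]

lemma hs_one_zero {n : ℕ} (y : Fin n) : hsInner 1 (onQubit PZ y) = 0 := by
  rw [← tens_one]; exact hs_tens_zero _ y rfl

lemma hs_onQubit_zero {n : ℕ} (j y : Fin n) (h : y ≠ j) :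
    hsInner (onQubit PZ j) (onQubit PZ y) = 0 := by
  rw [onQubit]; exact hs_tens_zero _ y (if_neg h)

lemma hs_czGen_zero {n : ℕ} (j j' y : Fin n) (h : y ≠ j) (h' : y ≠ j') :
    hsInner (czGen j j') (onQubit PZ y) = 0 := by
  rw [czGen, hs_smul, hs_add, hs_sub, hs_sub, hs_one_zero, hs_onQubit_zero j y h,
    hs_onQubit_zero j' y h']
  rw [onQubit, onQubit, tens_mul,
    hs_tens_zero _ y (by rw [if_neg h, if_neg h', one_mul])]
  ring

/-- The measured observable `Z_y` (for a radial qubit `y`) is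
Hilbert–Schmidt orthogonal to every element of the centre `𝔷` of the dynamical Lie
algebra; hence the mean of the loss vanishes. -/
theorem centre_orthogonal_Zy (nrad norb : ℕ) (h1 : 1 ≤ nrad) (h2 : 1 ≤ norb)
    (y : Fin (nrad + norb)) (hy : (y : ℕ) < nrad) :
    ∀ C ∈ centreZ nrad norb h2, hsInner C (onQubit PZ y) = 0 := by
  intro C hC
  induction hC using Submodule.span_induction with
  | mem M hM =>
    rcases hM with hM | ⟨j, h, hnr, rfl⟩
    · rcases hM with rfl | rfl
      · rw [hs_smul, hs_one_zero, mul_zero]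
      · rw [hs_smul]
        have hk : kron (1 : QMat nrad) (onQubit PZ (⟨0, h2⟩ : Fin norb)) =
            tens (Fin.append (fun _ : Fin nrad => (1 : Matrix (Fin 2) (Fin 2) ℂ))
              (fun k : Fin norb => if k = ⟨0, h2⟩ then PZ else 1)) := by
          rw [← tens_one, onQubit, kron_tens]
        rw [hk, hs_tens_zero _ y ?_, mul_zero]
        have hyc : y = Fin.castAdd norb ⟨(y : ℕ), hy⟩ := by ext; rfl
        rw [hyc, Fin.append_left]
    · rw [hs_smul, hs_czGen_zero, mul_zero]
      · intro he
        have : (y : ℕ) = j := congrArg Fin.val he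
        omega
      · intro he
        have : (y : ℕ) = j + 1 := congrArg Fin.val he
        omega
  | zero => simp [hsInner]
  | add A A' _ _ ha hb => rw [hs_add, ha, hb, add_zero]
  | smul r A _ ha =>
    have : r • A = (r : ℂ) • A := by
      ext f g; simp [Matrix.smul_apply, Complex.real_smul]
    rw [this, hs_smul, ha, mul_zero]


end
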